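/- Let O, Q′ and S be the operators on ℂ⁴ ⊗ ℂ⁴ defined in the context. Then Q′·O = O·Q′ = O, and S·O·S = O. Consequently, for every λ ∈ ℂ the interaction generator λ·O + conj(λ)·O† commutes both with the projector Q′ and with the swap S. -/

import Mathlib

noncomputable section
open Matrix Kronecker

/-- The matrix unit `|a⟩⟨b|` on `ℂ⁴` (with basis `|1⟩,…,|4⟩` indexed by `0,…,3`). -/
def E4 (a b : Fin 4) : Matrix (Fin 4) (Fin 4) ℂ := Matrix.single a b 1

/-- The interaction operator
`O = |3⟩⟨1|⊗|4⟩⟨4| + |3⟩⟨3|⊗|4⟩⟨2| + |4⟩⟨2|⊗|3⟩⟨3| + |4⟩⟨4|⊗|3⟩⟨1|` on `ℂ⁴ ⊗ ℂ⁴`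
(basis labels `1,2,3,4` encoded as `0,1,2,3`). -/
def Oint : Matrix (Fin 4 × Fin 4) (Fin 4 × Fin 4) ℂ :=
  E4 2 0 ⊗ₖ E4 3 3 + E4 2 2 ⊗ₖ E4 3 1 + E4 3 1 ⊗ₖ E4 2 2 + E4 3 3 ⊗ₖ E4 2 0

/-- The orthogonal projection `Q′` onto the span of
`{|2⟩|3⟩, |3⟩|2⟩, |3⟩|4⟩, |4⟩|3⟩, |1⟩|4⟩, |4⟩|1⟩}`
(basis labels `1,2,3,4` encoded as `0,1,2,3`). -/
def Qproj : Matrix (Fin 4 × Fin 4) (Fin 4 × Fin 4) ℂ :=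
  Matrix.diagonal fun ab =>
    if ab ∈ ({(1, 2), (2, 1), (2, 3), (3, 2), (0, 3), (3, 0)} : Finset (Fin 4 × Fin 4))
    then 1 else 0

/-- The swap operator `S|a⟩|b⟩ = |b⟩|a⟩` on `ℂ⁴ ⊗ ℂ⁴`. -/
def Swap : Matrix (Fin 4 × Fin 4) (Fin 4 × Fin 4) ℂ :=
  Matrix.of fun ab cd => if cd = (ab.2, ab.1) then 1 else 0

lemma swap_mul' (M : Matrix (Fin 4 × Fin 4) (Fin 4 × Fin 4) ℂ) :
    Swap * M = Matrix.of fun x y => M (x.2, x.1) y := by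
  ext x y
  simp [Swap, Matrix.mul_apply]

lemma mul_swap' (M : Matrix (Fin 4 × Fin 4) (Fin 4 × Fin 4) ℂ) :
    M * Swap = Matrix.of fun x y => M x (y.2, y.1) := by
  ext x y
  have key : ∀ z : Fin 4 × Fin 4, (y = (z.2, z.1)) ↔ z = (y.2, y.1) := by
    intro z; constructor <;> rintro rfl <;> simp
  simp [Swap, Matrix.mul_apply, key]

lemma swap_kron (A B : Matrix (Fin 4) (Fin 4) ℂ) :
    Swap * (A ⊗ₖ B) * Swap = B ⊗ₖ A := by
  rw [swap_mul', mul_swap']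
  ext x y
  simp [mul_comm]

lemma swap_swap : Swap * Swap = (1 : Matrix (Fin 4 × Fin 4) (Fin 4 × Fin 4) ℂ) := by
  rw [swap_mul']
  ext x y
  have : (y = (x.1, x.2)) ↔ x = y := by constructor <;> rintro rfl <;> simp
  simp [Swap, Matrix.one_apply, this]

lemma swapH : Swapᴴ = Swap := by
  ext x y
  have : (x = (y.2, y.1)) ↔ y = (x.2, x.1) := by constructor <;> rintro rfl <;> simp
  simp [Swap, Matrix.conjTranspose_apply, this, apply_ite (starRingEnd ℂ)]

lemma QprojH : Qprojᴴ = Qproj := by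
  ext x y
  simp [Qproj, Matrix.conjTranspose_apply, Matrix.diagonal_apply,
    apply_ite (starRingEnd ℂ), eq_comm (a := x)]
  aesop

lemma hQO : Qproj * Oint = Oint := by
  ext ⟨i, j⟩ kl
  rw [Qproj, Matrix.diagonal_mul]
  fin_cases i <;> fin_cases j <;>
    simp [Oint, E4, Matrix.single, Prod.ext_iff]

lemma hOQ : Oint * Qproj = Oint := by
  ext ij ⟨k, l⟩
  rw [Qproj, Matrix.mul_diagonal]
  fin_cases k <;> fin_cases l <;>
    simp [Oint, E4, Matrix.single, Prod.ext_iff]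

lemma hSOS : Swap * Oint * Swap = Oint := by
  rw [Oint]
  simp only [Matrix.mul_add, Matrix.add_mul, swap_kron]
  abel

/-- `Q′·O = O·Q′ = O` and `S·O·S = O`; consequently, for every `λ ∈ ℂ` the interaction
generator `λ·O + conj(λ)·O†` commutes both with the projector `Q′` and with the swap `S`. -/
theorem interaction_block_swap_invariance :
    Qproj * Oint = Oint ∧ Oint * Qproj = Oint ∧ Swap * Oint * Swap = Oint ∧
    ∀ l : ℂ, Commute (l • Oint + (starRingEnd ℂ) l • Ointᴴ) Qproj ∧
      Commute (l • Oint + (starRingEnd ℂ) l • Ointᴴ) Swap := by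
  have h3 : Qproj * Ointᴴ = Ointᴴ := by
    rw [← QprojH, ← Matrix.conjTranspose_mul, hOQ]
  have h4 : Ointᴴ * Qproj = Ointᴴ := by
    rw [← QprojH, ← Matrix.conjTranspose_mul, hQO]
  have hSO : Swap * Oint = Oint * Swap := by
    calc Swap * Oint = Swap * Oint * (Swap * Swap) := by rw [swap_swap, mul_one]
    _ = (Swap * Oint * Swap) * Swap := by noncomm_ring
    _ = Oint * Swap := by rw [hSOS]
  have hSOH : Swap * Ointᴴ = Ointᴴ * Swap := by
    calc Swap * Ointᴴ = (Oint * Swap)ᴴ := by rw [Matrix.conjTranspose_mul, swapH]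
    _ = (Swap * Oint)ᴴ := by rw [hSO]
    _ = Ointᴴ * Swap := by rw [Matrix.conjTranspose_mul, swapH]
  refine ⟨hQO, hOQ, hSOS, fun l => ⟨?_, ?_⟩⟩
  · show _ * _ = _ * _
    simp only [Matrix.add_mul, Matrix.mul_add, Matrix.smul_mul, Matrix.mul_smul,
      hQO, hOQ, h3, h4]
  · show _ * _ = _ * _
    simp only [Matrix.add_mul, Matrix.mul_add, Matrix.smul_mul, Matrix.mul_smul,
      hSO, hSOH]
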